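/- First difference operator formula (Proposition 4.1, part 1): for every Schwartz function κ : ℝ⁴ → ℂ, every Schwartz function h : ℝ → ℂ, every λ ∈ ℝ \ {0}, μ ∈ ℝ, and u ∈ ℝ, one has (π_{λ,μ}(x₁κ)h)(u) = (i/λ)[(−iλu)(π_{λ,μ}(κ)h)(u) − (π_{λ,μ}(κ)(v ↦ −iλv·h(v)))(u)], i.e. Δ_{x₁}π_{λ,μ}(κ) = (i/λ)(π_{λ,μ}(X₃)π_{λ,μ}(κ) − π_{λ,μ}(κ)π_{λ,μ}(X₃)) with π_{λ,μ}(X₃) the multiplication operator h(v) ↦ −iλv·h(v). -/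

import Mathlib

open MeasureTheory Complex

noncomputable section

/-- The group Fourier transform on the Engel group:
`(π_{λ,μ}(κ)h)(u) = ∫_{ℝ⁴} κ(x) exp(i((μ/(2λ))x₂ − λx₄ + λx₃(u−x₁) − (λ/2)x₂(u−x₁)²)) h(u−x₁) dx`. -/
def piF (lam mu : ℝ) (κ : ℝ × ℝ × ℝ × ℝ → ℂ) (h : ℝ → ℂ) (u : ℝ) : ℂ :=
  ∫ x : ℝ × ℝ × ℝ × ℝ,
    κ x * Complex.exp (Complex.I *
      (((mu / (2 * lam)) * x.2.1 - lam * x.2.2.2 + lam * x.2.2.1 * (u - x.1)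
        - (lam / 2) * x.2.1 * (u - x.1) ^ 2 : ℝ) : ℂ)) * h (u - x.1)

instance haar3 : (volume : Measure (ℝ × ℝ × ℝ)).IsAddHaarMeasure :=
  (by infer_instance : ((volume : Measure ℝ).prod (volume : Measure (ℝ × ℝ))).IsAddHaarMeasure)

instance haar4 : (volume : Measure (ℝ × ℝ × ℝ × ℝ)).IsAddHaarMeasure :=
  (by infer_instance : ((volume : Measure ℝ).prod (volume : Measure (ℝ × ℝ × ℝ))).IsAddHaarMeasure)

/-- First difference operator formula (Proposition 4.1, part 1):
`Δ_{x₁}π_{λ,μ}(κ) = (i/λ)(π_{λ,μ}(X₃)π_{λ,μ}(κ) − π_{λ,μ}(κ)π_{λ,μ}(X₃))`, where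
`π_{λ,μ}(X₃)` is the multiplication operator `h(v) ↦ −iλv·h(v)` and
`Δ_{x₁}π_{λ,μ}(κ) = π_{λ,μ}(x₁κ)`. -/
theorem engel_difference_operator_x1 :
    ∀ κ : SchwartzMap (ℝ × ℝ × ℝ × ℝ) ℂ, ∀ h : SchwartzMap ℝ ℂ,
      ∀ lam : ℝ, lam ≠ 0 → ∀ mu u : ℝ,
        piF lam mu (fun x => (x.1 : ℂ) * κ x) h u =
          (Complex.I / (lam : ℂ)) *
            ((-Complex.I * (lam : ℂ) * (u : ℂ)) * piF lam mu κ h u -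
              piF lam mu κ (fun v => -Complex.I * (lam : ℂ) * (v : ℂ) * h v) u) := by
  intro κ h lam hlam mu u
  have hlamC : (lam : ℂ) ≠ 0 := by exact_mod_cast hlam
  set φ : ℝ × ℝ × ℝ × ℝ → ℝ := fun x =>
      (mu / (2 * lam)) * x.2.1 - lam * x.2.2.2 + lam * x.2.2.1 * (u - x.1)
        - (lam / 2) * x.2.1 * (u - x.1) ^ 2 with hφ
  set e : ℝ × ℝ × ℝ × ℝ → ℂ := fun x => Complex.exp (Complex.I * ((φ x : ℝ) : ℂ)) with he
  have hφcont : Continuous φ := by fun_prop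
  have hecont : Continuous e :=
    Complex.continuous_exp.comp
      (continuous_const.mul (Complex.continuous_ofReal.comp hφcont))
  have henorm : ∀ x, ‖e x‖ = 1 := by
    intro x
    simp [he, Complex.norm_exp, Complex.mul_re]
  have hsubcont : Continuous (fun x : ℝ × ℝ × ℝ × ℝ => u - x.1) :=
    continuous_const.sub continuous_fst
  -- integrability helper
  have hint : ∀ g : ℝ → ℂ, Continuous g → ∀ C : ℝ, (∀ v, ‖g v‖ ≤ C) →
      Integrable (fun x : ℝ × ℝ × ℝ × ℝ => κ x * e x * g (u - x.1)) := by
    intro g hg C hC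
    refine Integrable.mono' ((κ.integrable).norm.const_mul C) ?_ ?_
    · exact ((κ.continuous.mul hecont).mul (hg.comp hsubcont)).aestronglyMeasurable
    · filter_upwards with x
      calc ‖κ x * e x * g (u - x.1)‖ = ‖κ x‖ * ‖e x‖ * ‖g (u - x.1)‖ := by
            simp [norm_mul]
        _ = ‖κ x‖ * ‖g (u - x.1)‖ := by rw [henorm]; ring
        _ ≤ C * ‖κ x‖ := by
            have h1 := hC (u - x.1)
            have h0 : (0:ℝ) ≤ ‖κ x‖ := norm_nonneg _
            nlinarith [norm_nonneg (g (u - x.1))]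
  obtain ⟨C₁, -, hC₁⟩ := h.decay 0 0
  have hC₁' : ∀ v : ℝ, ‖h v‖ ≤ C₁ := fun v => by simpa using hC₁ v
  obtain ⟨C₂, -, hC₂⟩ := h.decay 1 0
  have hC₂' : ∀ v : ℝ, ‖-Complex.I * (lam : ℂ) * (v : ℂ) * h v‖ ≤ |lam| * C₂ := by
    intro v
    have h1 := hC₂ v
    simp only [norm_iteratedFDeriv_zero, pow_one, Real.norm_eq_abs] at h1
    have h2 : ‖-Complex.I * (lam : ℂ) * (v : ℂ) * h v‖ = |lam| * (|v| * ‖h v‖) := by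
      simp [norm_mul, Complex.norm_real]; ring
    rw [h2]
    have h3 : (0:ℝ) ≤ |lam| := abs_nonneg _
    nlinarith
  have I1 : Integrable (fun x : ℝ × ℝ × ℝ × ℝ => κ x * e x * h (u - x.1)) :=
    hint h h.continuous C₁ hC₁'
  have I2 : Integrable (fun x : ℝ × ℝ × ℝ × ℝ =>
      κ x * e x * (-Complex.I * (lam : ℂ) * ((u - x.1 : ℝ) : ℂ) * h (u - x.1))) :=
    hint (fun v => -Complex.I * (lam : ℂ) * (v : ℂ) * h v)
      (by fun_prop) (|lam| * C₂) hC₂'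
  have hp0 : piF lam mu (fun x => (x.1 : ℂ) * κ x) h u =
      ∫ x : ℝ × ℝ × ℝ × ℝ, ((x.1 : ℂ) * κ x) * e x * h (u - x.1) := rfl
  have hp1 : piF lam mu κ h u = ∫ x : ℝ × ℝ × ℝ × ℝ, κ x * e x * h (u - x.1) := rfl
  have hp2 : piF lam mu κ (fun v => -Complex.I * (lam : ℂ) * (v : ℂ) * h v) u =
      ∫ x : ℝ × ℝ × ℝ × ℝ,
        κ x * e x * (-Complex.I * (lam : ℂ) * ((u - x.1 : ℝ) : ℂ) * h (u - x.1)) := rfl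
  rw [hp0, hp1, hp2]
  have hc : Complex.I / (lam : ℂ) * (-Complex.I * (lam : ℂ)) = 1 := by
    field_simp
    linear_combination (-1 : ℂ) * Complex.I_mul_I
  have key : ∀ x : ℝ × ℝ × ℝ × ℝ, ((x.1 : ℂ) * κ x) * e x * h (u - x.1) =
      ((Complex.I / (lam : ℂ)) * (-Complex.I * (lam : ℂ) * (u : ℂ))) * (κ x * e x * h (u - x.1)) -
      (Complex.I / (lam : ℂ)) *
        (κ x * e x * (-Complex.I * (lam : ℂ) * ((u - x.1 : ℝ) : ℂ) * h (u - x.1))) := by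
    intro x
    push_cast
    linear_combination (-((x.1 : ℂ) * (κ x * e x * h (u - x.1)))) * hc
  rw [integral_congr_ae (Filter.Eventually.of_forall key)]
  rw [integral_sub (I1.const_mul _) (I2.const_mul _), MeasureTheory.integral_const_mul, MeasureTheory.integral_const_mul]
  ring
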